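/- Let f : [0,1] → ℝ be continuous, and suppose its graph G = {(x, f(x)) : x ∈ [0,1]} is a self-similar set. Let ω_f = sup_{x,y ∈ [0,1]} |f(x) − f(y)|. Then f is Lipschitz; more precisely, |f(x) − f(y)| ≤ 4·ω_f·|x − y| for all x, y ∈ [0,1]. -/

import Mathlib

/-- The rotation of ℝ² by angle θ, given by the matrix ((cos θ, sin θ), (−sin θ, cos θ)). -/
noncomputable def rot (θ : ℝ) (v : ℝ × ℝ) : ℝ × ℝ :=
  (v.1 * Real.cos θ + v.2 * Real.sin θ, -v.1 * Real.sin θ + v.2 * Real.cos θ)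

/-- A (contracting) similitude of ℝ²: a map `S v = r • ρ_θ v + b` with `r ∈ (0,1)`. -/
def IsSimilitude (S : ℝ × ℝ → ℝ × ℝ) : Prop :=
  ∃ (r θ : ℝ) (b : ℝ × ℝ), r ∈ Set.Ioo (0 : ℝ) 1 ∧ ∀ v, S v = r • rot θ v + b

/-- A compact set `K ⊆ ℝ²` is self-similar if it is the union of its images under
finitely many (at least one) contracting similitudes. -/
def IsSelfSimilar (K : Set (ℝ × ℝ)) : Prop :=
  IsCompact K ∧ ∃ (k : ℕ) (S : Fin k → ℝ × ℝ → ℝ × ℝ),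
    0 < k ∧ (∀ i, IsSimilitude (S i)) ∧ K = ⋃ i, S i '' K

open Real Set


/-- Among the members of a list satisfying `P`, there is one with maximal second
coordinate. -/
private lemma list_max_of_exists {l : List (ℝ × ℝ)} {P : ℝ × ℝ → Prop}
    (h : ∃ q ∈ l, P q) : ∃ q ∈ l, P q ∧ ∀ q' ∈ l, P q' → q'.2 ≤ q.2 := by
  induction l with
  | nil => simp at h
  | cons a l ih =>
    by_cases hl : ∃ q ∈ l, P q
    · obtain ⟨m, hm, hPm, hmax⟩ := ih hl
      by_cases hPa : P a
      · rcases le_total a.2 m.2 with hcmp | hcmp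
        · refine ⟨m, List.mem_cons_of_mem _ hm, hPm, ?_⟩
          intro q' hq' hPq'
          rcases List.mem_cons.1 hq' with rfl | hq'
          · exact hcmp
          · exact hmax q' hq' hPq'
        · refine ⟨a, List.mem_cons_self, hPa, ?_⟩
          intro q' hq' hPq'
          rcases List.mem_cons.1 hq' with rfl | hq'
          · exact le_rfl
          · exact le_trans (hmax q' hq' hPq') hcmp
      · refine ⟨m, List.mem_cons_of_mem _ hm, hPm, ?_⟩
        intro q' hq' hPq'
        rcases List.mem_cons.1 hq' with rfl | hq'
        · exact absurd hPq' hPa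
        · exact hmax q' hq' hPq'
    · obtain ⟨q, hq, hPq⟩ := h
      rcases List.mem_cons.1 hq with rfl | hq'
      · refine ⟨q, List.mem_cons_self, hPq, ?_⟩
        intro q' hq' hPq'
        rcases List.mem_cons.1 hq' with rfl | hq'
        · exact le_rfl
        · exact absurd ⟨q', hq', hPq'⟩ hl
      · exact absurd ⟨q, hq', hPq⟩ hl

private lemma list_delta (l : List (ℝ × ℝ)) (t y : ℝ) (hty : t < y) :
    ∃ δ > 0, t + δ ≤ y ∧ ∀ p ∈ l, p.1 ≤ t ∨ t + δ ≤ p.1 := by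
  induction l with
  | nil => exact ⟨y - t, by linarith, by linarith, by simp⟩
  | cons a l ih =>
    obtain ⟨δ, hδ, hδy, hall⟩ := ih
    by_cases ha : a.1 ≤ t
    · refine ⟨δ, hδ, hδy, ?_⟩
      intro p hp
      rcases List.mem_cons.1 hp with rfl | hp
      · exact Or.inl ha
      · exact hall p hp
    · push_neg at ha
      refine ⟨min δ (a.1 - t), lt_min hδ (by linarith), ?_, ?_⟩
      · have : min δ (a.1 - t) ≤ δ := min_le_left _ _
        linarith
      · intro p hp
        rcases List.mem_cons.1 hp with rfl | hp
        · right
          have : min δ (p.1 - t) ≤ p.1 - t := min_le_right _ _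
          linarith
        · rcases hall p hp with h | h
          · exact Or.inl h
          · right
            have : min δ (a.1 - t) ≤ δ := min_le_left _ _
            linarith

private lemma chain_progress (l : List (ℝ × ℝ)) (x y t : ℝ) (hxt : x ≤ t) (hty : t < y)
    (hcov : ∀ z, x ≤ z → z ≤ y → ∃ p ∈ l, p.1 ≤ z ∧ z ≤ p.2) :
    ∃ q ∈ l, q.1 ≤ t ∧ t < q.2 := by
  obtain ⟨δ, hδ0, hδy, hδ⟩ := list_delta l t y hty
  obtain ⟨q, hq, h1, h2⟩ := hcov (t + δ/2) (by linarith) (by linarith)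
  rcases hδ q hq with h | h
  · exact ⟨q, hq, h, by linarith⟩
  · exfalso; linarith

private lemma chain_aux (f : ℝ → ℝ) (ω w x y : ℝ) (hω : 0 ≤ ω) (hw : 0 ≤ w)
    (l : List (ℝ × ℝ))
    (hcov : ∀ z, x ≤ z → z ≤ y → ∃ p ∈ l, p.1 ≤ z ∧ z ≤ p.2)
    (hosc : ∀ p ∈ l, ∀ u v, p.1 ≤ u → u ≤ p.2 → p.1 ≤ v → v ≤ p.2 →
      |f u - f v| ≤ ω * (p.2 - p.1))
    (hlen : ∀ p ∈ l, p.2 - p.1 ≤ w) :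
    ∀ n : ℕ, ∀ t p : ℝ, x ≤ t → t ≤ y → p ≤ t →
      ((l.map Prod.snd).toFinset.filter (fun b => t < b)).card ≤ n →
      (∀ q ∈ l, q.1 ≤ t → t < q.2 → p < q.1) →
      |f t - f y| ≤ ω * (3 * (y - t) + (t - p) + w) := by
  intro n
  induction n with
  | zero =>
    intro t p hxt hty hp hcard _hinv
    rcases eq_or_lt_of_le hty with rfl | hty'
    · rw [sub_self, abs_zero]
      have : (0:ℝ) ≤ 3 * (t - t) + (t - p) + w := by linarith
      exact mul_nonneg hω this
    · exfalso
      obtain ⟨q, hq, _hq1, hq2⟩ := chain_progress l x y t hxt hty' hcov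
      have hmem : q.2 ∈ (l.map Prod.snd).toFinset.filter (fun b => t < b) :=
        Finset.mem_filter.2 ⟨List.mem_toFinset.2 (List.mem_map_of_mem hq), hq2⟩
      have := Finset.card_pos.2 ⟨q.2, hmem⟩
      omega
  | succ n ih =>
    intro t p hxt hty hp hcard hinv
    rcases eq_or_lt_of_le hty with rfl | hty'
    · rw [sub_self, abs_zero]
      have : (0:ℝ) ≤ 3 * (t - t) + (t - p) + w := by linarith
      exact mul_nonneg hω this
    · obtain ⟨q0, hq0, hq01, hq02⟩ := chain_progress l x y t hxt hty' hcov
      obtain ⟨q, hq, ⟨hq1, hq2⟩, hqmax⟩ :=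
        list_max_of_exists (P := fun q => q.1 ≤ t ∧ t < q.2) ⟨q0, hq0, hq01, hq02⟩
      have hpq1 : p < q.1 := hinv q hq hq1 hq2
      rcases le_or_gt y q.2 with hyB | hBy
      · have h := hosc q hq t y hq1 (le_of_lt hq2) (le_trans hq1 hty) hyB
        have h2 : ω * (q.2 - q.1) ≤ ω * w :=
          mul_le_mul_of_nonneg_left (hlen q hq) hω
        have h3 : 0 ≤ ω * (3 * (y - t) + (t - p)) :=
          mul_nonneg hω (by linarith)
        have he : ω * (3 * (y - t) + (t - p) + w)
            = ω * (3 * (y - t) + (t - p)) + ω * w := by ring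
        linarith
      · -- recurse from B := q.2
        have hxB : x ≤ q.2 := le_trans hxt hq2.le
        have hinvB : ∀ q' ∈ l, q'.1 ≤ q.2 → q.2 < q'.2 → t < q'.1 := by
          intro q' hq' h1 h2
          by_contra hle
          push_neg at hle
          have : q'.2 ≤ q.2 := hqmax q' hq' ⟨hle, lt_trans hq2 h2⟩
          linarith
        have hcardB : ((l.map Prod.snd).toFinset.filter (fun b => q.2 < b)).card ≤ n := by
          have hsub : (l.map Prod.snd).toFinset.filter (fun b => q.2 < b) ⊆
              (l.map Prod.snd).toFinset.filter (fun b => t < b) := by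
            intro b hb
            rw [Finset.mem_filter] at hb ⊢
            exact ⟨hb.1, lt_trans hq2 hb.2⟩
          have hmemB : q.2 ∈ (l.map Prod.snd).toFinset.filter (fun b => t < b) :=
            Finset.mem_filter.2 ⟨List.mem_toFinset.2 (List.mem_map_of_mem hq), hq2⟩
          have hnot : q.2 ∉ (l.map Prod.snd).toFinset.filter (fun b => q.2 < b) := by
            simp
          have hss := (Finset.ssubset_iff_of_subset hsub).2 ⟨q.2, hmemB, hnot⟩
          have := Finset.card_lt_card hss
          omega
        have step2 := ih q.2 t hxB hBy.le hq2.le hcardB hinvB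
        have step1 : |f t - f q.2| ≤ ω * ((q.2 - t) + (t - p)) := by
          have h := hosc q hq t q.2 hq1 hq2.le (le_trans hq1 hq2.le) le_rfl
          have h2 : ω * (q.2 - q.1) ≤ ω * ((q.2 - t) + (t - p)) :=
            mul_le_mul_of_nonneg_left (by linarith) hω
          linarith
        have htri := abs_sub_le (f t) (f q.2) (f y)
        have h0 : 0 ≤ ω * (q.2 - t) := mul_nonneg hω (by linarith)
        have heq : ω * (3 * (y - t) + (t - p) + w)
            = ω * ((q.2 - t) + (t - p)) + ω * (3 * (y - q.2) + (q.2 - t) + w)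
              + ω * (q.2 - t) := by ring
        linarith

private lemma chain_bound (f : ℝ → ℝ) (ω w x y : ℝ) (hω : 0 ≤ ω) (hw : 0 ≤ w) (hxy : x ≤ y)
    (l : List (ℝ × ℝ))
    (hcov : ∀ z, x ≤ z → z ≤ y → ∃ p ∈ l, p.1 ≤ z ∧ z ≤ p.2)
    (hosc : ∀ p ∈ l, ∀ u v, p.1 ≤ u → u ≤ p.2 → p.1 ≤ v → v ≤ p.2 →
      |f u - f v| ≤ ω * (p.2 - p.1))
    (hlen : ∀ p ∈ l, p.2 - p.1 ≤ w) :
    |f x - f y| ≤ ω * (3 * (y - x) + 2 * w) := by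
  have h := chain_aux f ω w x y hω hw l hcov hosc hlen
    ((l.map Prod.snd).toFinset.filter (fun b => x < b)).card x (x - w)
    le_rfl hxy (by linarith) le_rfl ?_
  · calc |f x - f y| ≤ ω * (3 * (y - x) + (x - (x - w)) + w) := h
      _ = ω * (3 * (y - x) + 2 * w) := by ring_nf
  · intro q hq h1 h2
    have := hlen q hq
    linarith

private lemma rigidity (A : Set ℝ) (hne : A.Nonempty)
    (hbdd : ∀ a ∈ A, -(Real.pi/2) ≤ a ∧ a ≤ Real.pi/2)
    (hicc : ∀ a ∈ A, ∀ b ∈ A, Set.Icc a b ⊆ A)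
    (θ : ℝ) (hsmall : sSup A - sInf A < Real.pi)
    (H : ∀ α ∈ A, ∃ m : ℤ, α - θ - m * Real.pi ∈ A) :
    ∃ m : ℤ, θ + m * Real.pi = 0 := by
  have hπ := Real.pi_pos
  have hbA : BddAbove A := ⟨Real.pi/2, fun a ha => (hbdd a ha).2⟩
  have hbB : BddBelow A := ⟨-(Real.pi/2), fun a ha => (hbdd a ha).1⟩
  set γ := sInf A with hγ
  set β := sSup A with hβ
  have hmemle : ∀ a ∈ A, γ ≤ a ∧ a ≤ β := fun a ha => ⟨csInf_le hbB ha, le_csSup hbA ha⟩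
  have core : ∀ α₁ ∈ A, ∀ α₂ ∈ A, ∀ m₁ m₂ : ℤ,
      α₁ - θ - m₁ * Real.pi ∈ A → α₂ - θ - m₂ * Real.pi ∈ A → ¬ (m₁ < m₂) := by
    intro α₁ h₁ α₂ h₂ m₁ m₂ hw₁ hw₂ hlt
    obtain ⟨ha1, hb1⟩ := hmemle _ hw₁
    obtain ⟨ha2, hb2⟩ := hmemle _ hw₂
    have hm12 : (m₁ : ℝ) + 1 ≤ m₂ := by exact_mod_cast hlt
    have hm12' : (m₁ : ℝ) * Real.pi + Real.pi ≤ m₂ * Real.pi := by nlinarith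
    set c := β - γ with hc
    have hc0 : 0 ≤ c := by
      obtain ⟨a, ha⟩ := hne
      obtain ⟨u1, u2⟩ := hmemle a ha
      simp only [hc]; linarith
    set αv := γ + θ + m₂ * Real.pi - (Real.pi - c)/2 with hαv
    have hcπ : c < Real.pi := by simp only [hc]; linarith [hsmall]
    have hlt1 : α₁ < αv := by
      simp only [hαv]
      -- α₁ ≤ θ + m₁π + β
      have : α₁ ≤ θ + m₁ * Real.pi + β := by linarith
      have hβγ : β = γ + c := by simp only [hc]; ring
      nlinarith
    have hlt2 : αv < α₂ := by
      simp only [hαv]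
      have : γ + θ + m₂ * Real.pi ≤ α₂ := by linarith
      linarith
    have hαvA : αv ∈ A := hicc _ h₁ _ h₂ ⟨le_of_lt hlt1, le_of_lt hlt2⟩
    obtain ⟨mv, hwv⟩ := H αv hαvA
    obtain ⟨hav, hbv⟩ := hmemle _ hwv
    -- γ ≤ αv - θ - mv π and αv - θ - mv π ≤ β = γ + c
    have hβγ : β = γ + c := by simp only [hc]; ring
    have h1 : (mv:ℝ) * Real.pi < m₂ * Real.pi := by
      simp only [hαv] at hav
      linarith
    have h2 : (m₂:ℝ) * Real.pi - Real.pi < mv * Real.pi := by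
      simp only [hαv] at hbv
      nlinarith
    have hi1 : mv < m₂ := by
      by_contra hcon
      push_neg at hcon
      have : (m₂:ℝ) ≤ mv := by exact_mod_cast hcon
      nlinarith
    have hi2 : m₂ - 1 < mv := by
      by_contra hcon
      push_neg at hcon
      have : (mv:ℝ) ≤ (m₂:ℝ) - 1 := by exact_mod_cast hcon
      nlinarith
    omega
  obtain ⟨α₀, hα₀⟩ := hne
  obtain ⟨m₀, hw₀⟩ := H α₀ hα₀
  have hall : ∀ α ∈ A, α - θ - m₀ * Real.pi ∈ A := by
    intro α hα
    obtain ⟨m, hw⟩ := H α hα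
    have h1 := core α hα α₀ hα₀ m m₀ hw hw₀
    have h2 := core α₀ hα₀ α hα m₀ m hw₀ hw
    have : m = m₀ := by omega
    rwa [this] at hw
  have hup : β ≤ β + (θ + m₀ * Real.pi) := by
    apply csSup_le ⟨α₀, hα₀⟩
    intro a ha
    have := (hmemle _ (hall a ha)).2
    linarith
  have hdn : γ + (θ + m₀ * Real.pi) ≤ γ := by
    apply le_csInf ⟨α₀, hα₀⟩
    intro a ha
    have := (hmemle _ (hall a ha)).1
    linarith
  exact ⟨m₀, by linarith⟩


set_option maxHeartbeats 1000000 in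
theorem selfSimilar_graph_is_lipschitz (f : ℝ → ℝ)
    (hf : ContinuousOn f (Set.Icc (0 : ℝ) 1))
    (G : Set (ℝ × ℝ)) (hG : G = (fun x => (x, f x)) '' Set.Icc (0 : ℝ) 1)
    (hss : IsSelfSimilar G)
    (ω : ℝ)
    (hω : ω = sSup {d : ℝ | ∃ x ∈ Set.Icc (0 : ℝ) 1, ∃ y ∈ Set.Icc (0 : ℝ) 1,
      d = |f x - f y|}) :
    ∀ x ∈ Set.Icc (0 : ℝ) 1, ∀ y ∈ Set.Icc (0 : ℝ) 1,
      |f x - f y| ≤ 4 * ω * |x - y| := by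
  obtain ⟨hGc, k, S, hk, hSim, hcover⟩ := hss
  choose r θ b hr hS using hSim
  -- boundedness of f on [0,1]
  obtain ⟨C, hC⟩ := isCompact_Icc.exists_bound_of_continuousOn hf
  have hbddD : BddAbove {d : ℝ | ∃ x ∈ Set.Icc (0:ℝ) 1, ∃ y ∈ Set.Icc (0:ℝ) 1,
      d = |f x - f y|} := by
    refine ⟨2*C, ?_⟩
    rintro d ⟨u, hu, v, hv, rfl⟩
    have h1 := hC u hu
    have h2 := hC v hv
    rw [Real.norm_eq_abs] at h1 h2
    have h3 := abs_sub (f u) (f v)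
    linarith
  have hωb : ∀ u ∈ Set.Icc (0:ℝ) 1, ∀ v ∈ Set.Icc (0:ℝ) 1, |f u - f v| ≤ ω := by
    intro u hu v hv
    rw [hω]
    exact le_csSup hbddD ⟨u, hu, v, hv, rfl⟩
  have h0I : (0:ℝ) ∈ Set.Icc (0:ℝ) 1 := by norm_num
  have hωnn : 0 ≤ ω := by
    calc (0:ℝ) = |f 0 - f 0| := by simp
      _ ≤ ω := hωb 0 h0I 0 h0I
  -- graph facts
  have hGmem : ∀ z ∈ Set.Icc (0:ℝ) 1, (z, f z) ∈ G := by
    intro z hz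
    rw [hG]
    exact ⟨z, hz, rfl⟩
  have hGpt : ∀ p ∈ G, p.1 ∈ Set.Icc (0:ℝ) 1 ∧ p = (p.1, f p.1) := by
    intro p hp
    rw [hG] at hp
    obtain ⟨z, hz, rfl⟩ := hp
    exact ⟨hz, rfl⟩
  have hsub : ∀ i, ∀ p ∈ G, S i p ∈ G := by
    intro i p hp
    have : S i p ∈ ⋃ j, S j '' G := Set.mem_iUnion.2 ⟨i, ⟨p, hp, rfl⟩⟩
    rwa [← hcover] at this
  have hSco : ∀ i (v : ℝ × ℝ), S i v =
      (r i * (v.1 * Real.cos (θ i) + v.2 * Real.sin (θ i)) + (b i).1,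
       r i * (-v.1 * Real.sin (θ i) + v.2 * Real.cos (θ i)) + (b i).2) := by
    intro i v
    rw [hS i v]
    rfl
  have hinj : ∀ i (u v : ℝ × ℝ), S i u = S i v → u = v := by
    intro i u v h
    rw [hSco, hSco] at h
    have h1 := congrArg Prod.fst h
    have h2 := congrArg Prod.snd h
    simp only [Prod.fst, Prod.snd] at h1 h2
    have hr0 : r i ≠ 0 := ne_of_gt (hr i).1
    have e1 : u.1 * Real.cos (θ i) + u.2 * Real.sin (θ i)
        = v.1 * Real.cos (θ i) + v.2 * Real.sin (θ i) :=
      mul_left_cancel₀ hr0 (by linarith)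
    have e2 : -u.1 * Real.sin (θ i) + u.2 * Real.cos (θ i)
        = -v.1 * Real.sin (θ i) + v.2 * Real.cos (θ i) :=
      mul_left_cancel₀ hr0 (by linarith)
    have hpyth := Real.sin_sq_add_cos_sq (θ i)
    have hu1 : u.1 = v.1 := by
      linear_combination Real.cos (θ i) * e1 - Real.sin (θ i) * e2 - (u.1 - v.1) * hpyth
    have hu2 : u.2 = v.2 := by
      linear_combination Real.sin (θ i) * e1 + Real.cos (θ i) * e2 - (u.2 - v.2) * hpyth
    exact Prod.ext hu1 hu2
  have hpt : ∀ i, ∀ x ∈ Set.Icc (0:ℝ) 1,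
      (r i * (x * Real.cos (θ i) + f x * Real.sin (θ i)) + (b i).1) ∈ Set.Icc (0:ℝ) 1 ∧
      f (r i * (x * Real.cos (θ i) + f x * Real.sin (θ i)) + (b i).1)
        = r i * (-x * Real.sin (θ i) + f x * Real.cos (θ i)) + (b i).2 := by
    intro i x hx
    have hm := hsub i _ (hGmem x hx)
    rw [hSco] at hm
    obtain ⟨h1, h2⟩ := hGpt _ hm
    refine ⟨h1, ?_⟩
    have h3 := congrArg Prod.snd h2
    exact h3.symm
  -- the set of chord slopes
  set SS : Set ℝ := {s | ∃ u ∈ Set.Icc (0:ℝ) 1, ∃ v ∈ Set.Icc (0:ℝ) 1,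
    v < u ∧ s = (f u - f v)/(u - v)} with hSSdef
  have h1I : (1:ℝ) ∈ Set.Icc (0:ℝ) 1 := by norm_num
  have hSSne : SS.Nonempty := ⟨(f 1 - f 0)/(1 - 0), 1, h1I, 0, h0I, by norm_num, rfl⟩
  set T : Set (ℝ × ℝ) := {p : ℝ × ℝ | p.1 ∈ Set.Icc (0:ℝ) 1 ∧ p.2 ∈ Set.Icc (0:ℝ) 1
    ∧ p.2 < p.1} with hTdef
  have hTeq : T = (Set.Icc (0:ℝ) 1 ×ˢ Set.Icc (0:ℝ) 1) ∩ {p : ℝ × ℝ | p.2 < p.1} := by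
    ext p
    simp only [hTdef, Set.mem_setOf_eq, Set.mem_inter_iff, Set.mem_prod]
    tauto
  have hTconv : Convex ℝ T := by
    rw [hTeq]
    refine Convex.inter ((convex_Icc _ _).prod (convex_Icc _ _)) ?_
    intro p hp q hq a c ha hc hac
    simp only [Set.mem_setOf_eq] at hp hq ⊢
    have e1 : (a • p + c • q).1 = a * p.1 + c * q.1 := rfl
    have e2 : (a • p + c • q).2 = a * p.2 + c * q.2 := rfl
    rw [e1, e2]
    rcases eq_or_lt_of_le ha with rfl | ha'
    · have hc1 : c = 1 := by linarith
      rw [hc1]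
      simpa using hq
    · nlinarith [mul_lt_mul_of_pos_left hp ha', mul_le_mul_of_nonneg_left hq.le hc]
  have hTpre : IsPreconnected T := hTconv.isPreconnected
  have hSSeq : SS = (fun p : ℝ × ℝ => (f p.1 - f p.2)/(p.1 - p.2)) '' T := by
    ext s
    constructor
    · rintro ⟨u, hu, v, hv, hvu, rfl⟩
      exact ⟨(u, v), ⟨hu, hv, hvu⟩, rfl⟩
    · rintro ⟨⟨u, v⟩, ⟨hu, hv, hvu⟩, rfl⟩
      exact ⟨u, hu, v, hv, hvu, rfl⟩
  have hcontOn : ContinuousOn (fun p : ℝ × ℝ => (f p.1 - f p.2)/(p.1 - p.2)) T := by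
    apply ContinuousOn.div
    · exact (hf.comp continuous_fst.continuousOn (fun p hp => hp.1)).sub
        (hf.comp continuous_snd.continuousOn (fun p hp => hp.2.1))
    · exact (continuous_fst.sub continuous_snd).continuousOn
    · intro p hp
      exact sub_ne_zero.2 (ne_of_gt hp.2.2)
  have hSSpre : IsPreconnected SS := by
    rw [hSSeq]
    exact hTpre.image _ hcontOn
  have hSSicc : ∀ s₁ ∈ SS, ∀ s₂ ∈ SS, Set.Icc s₁ s₂ ⊆ SS :=
    fun s₁ h₁ s₂ h₂ => hSSpre.Icc_subset h₁ h₂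
  -- key: chords map to chords under each similitude
  have key : ∀ i, ∀ s ∈ SS, Real.cos (θ i) + s * Real.sin (θ i) ≠ 0 ∧
      (s * Real.cos (θ i) - Real.sin (θ i)) / (Real.cos (θ i) + s * Real.sin (θ i)) ∈ SS := by
    intro i s hs
    obtain ⟨u, hu, v, hv, hvu, hseq⟩ := hs
    have huv : u - v ≠ 0 := ne_of_gt (by linarith)
    have hΔ : f u - f v = s * (u - v) := by
      rw [hseq]
      field_simp
    obtain ⟨hu1, hu2⟩ := hpt i u hu
    obtain ⟨hv1, hv2⟩ := hpt i v hv
    set U := r i * (u * Real.cos (θ i) + f u * Real.sin (θ i)) + (b i).1 with hU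
    set V := r i * (v * Real.cos (θ i) + f v * Real.sin (θ i)) + (b i).1 with hV
    have hd1 : U - V = r i * (u - v) * (Real.cos (θ i) + s * Real.sin (θ i)) := by
      rw [hU, hV]
      linear_combination (r i * Real.sin (θ i)) * hΔ
    have hd2 : f U - f V = r i * (u - v) * (s * Real.cos (θ i) - Real.sin (θ i)) := by
      rw [hu2, hv2]
      linear_combination (r i * Real.cos (θ i)) * hΔ
    have hrne : r i * (u - v) ≠ 0 := mul_ne_zero (ne_of_gt (hr i).1) huv
    have hfac : Real.cos (θ i) + s * Real.sin (θ i) ≠ 0 := by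
      intro h0
      have hUV : U = V := by
        have := hd1
        rw [h0, mul_zero] at this
        linarith
      have hSiu : S i (u, f u) = (U, f U) := by
        rw [hSco]
        exact Prod.ext rfl hu2.symm
      have hSiv : S i (v, f v) = (V, f V) := by
        rw [hSco]
        exact Prod.ext rfl hv2.symm
      have hEq : S i (u, f u) = S i (v, f v) := by
        rw [hSiu, hSiv, hUV]
      have := congrArg Prod.fst (hinj i _ _ hEq)
      simp only at this
      exact huv (by linarith [this])
    refine ⟨hfac, ?_⟩
    have hUVne : U ≠ V := by
      intro h0
      have hz : r i * (u - v) * (Real.cos (θ i) + s * Real.sin (θ i)) = 0 := by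
        rw [← hd1, h0, sub_self]
      rcases mul_eq_zero.1 hz with h | h
      · exact hrne h
      · exact hfac h
    have hval : (s * Real.cos (θ i) - Real.sin (θ i)) / (Real.cos (θ i) + s * Real.sin (θ i))
        = (f U - f V)/(U - V) := by
      rw [hd1, hd2, mul_div_mul_left _ _ hrne]
    rcases lt_or_gt_of_ne hUVne with h | h
    · rw [hval]
      have hflip : (f U - f V)/(U - V) = (f V - f U)/(V - U) := by
        rw [div_eq_div_iff (sub_ne_zero.2 hUVne) (sub_ne_zero.2 (ne_of_gt h))]
        ring
      rw [hflip]
      exact ⟨V, hv1, U, hu1, h, rfl⟩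
    · rw [hval]
      exact ⟨U, hu1, V, hv1, h, rfl⟩
  -- arctan image
  set A : Set ℝ := Real.arctan '' SS with hA
  have hAne : A.Nonempty := hSSne.image _
  have hAbdd : ∀ a ∈ A, -(Real.pi/2) ≤ a ∧ a ≤ Real.pi/2 := by
    rintro a ⟨s, hs, rfl⟩
    exact ⟨(Real.neg_pi_div_two_lt_arctan s).le, (Real.arctan_lt_pi_div_two s).le⟩
  have hApre : IsPreconnected A := hSSpre.image _ Real.continuous_arctan.continuousOn
  have hAicc : ∀ a ∈ A, ∀ b ∈ A, Set.Icc a b ⊆ A := fun a ha b hb => hApre.Icc_subset ha hb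
  have hβle : sSup A ≤ Real.pi/2 := csSup_le hAne fun a ha => (hAbdd a ha).2
  have hγge : -(Real.pi/2) ≤ sInf A := le_csInf hAne fun a ha => (hAbdd a ha).1
  have hsin : ∀ i, Real.sin (θ i) = 0 := by
    rcases lt_or_ge (sSup A - sInf A) Real.pi with hcase | hcase
    · intro i
      have H : ∀ α ∈ A, ∃ m : ℤ, α - θ i - m * Real.pi ∈ A := by
        rintro α ⟨s, hs, rfl⟩
        obtain ⟨hne0, hmem⟩ := key i s hs
        set s' := (s * Real.cos (θ i) - Real.sin (θ i)) /
          (Real.cos (θ i) + s * Real.sin (θ i)) with hs'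
        set α := Real.arctan s with hα
        have hca : 0 < Real.cos α := Real.cos_arctan_pos s
        have hsa : Real.sin α = s * Real.cos α := by
          rw [hα, Real.sin_arctan, Real.cos_arctan]
          ring
        have hcos1 : Real.cos (α - θ i)
            = Real.cos α * (Real.cos (θ i) + s * Real.sin (θ i)) := by
          rw [Real.cos_sub, hsa]
          ring
        have hsin1 : Real.sin (α - θ i)
            = Real.cos α * (s * Real.cos (θ i) - Real.sin (θ i)) := by
          rw [Real.sin_sub, hsa]
          ring
        have hcosne : Real.cos (α - θ i) ≠ 0 := by
          rw [hcos1]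
          exact mul_ne_zero (ne_of_gt hca) hne0
        set m := ⌊(α - θ i + Real.pi/2)/Real.pi⌋ with hm
        have hπ := Real.pi_pos
        have h1 : 0 ≤ (α - θ i + Real.pi/2) - m * Real.pi :=
          Int.sub_floor_div_mul_nonneg _ hπ
        have h2 : (α - θ i + Real.pi/2) - m * Real.pi < Real.pi :=
          Int.sub_floor_div_mul_lt _ hπ
        set x₀ := α - θ i - m * Real.pi with hx₀
        have hx₀lt : x₀ < Real.pi/2 := by
          rw [hx₀] at *
          linarith
        have hx₀ge : -(Real.pi/2) ≤ x₀ := by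
          rw [hx₀] at *
          linarith
        have hx₀ne : x₀ ≠ -(Real.pi/2) := by
          intro h0
          have hαθ : α - θ i = m * Real.pi - Real.pi/2 := by
            rw [hx₀] at h0
            linarith
          apply hcosne
          rw [hαθ, Real.cos_sub, Real.cos_pi_div_two, Real.sin_pi_div_two,
            Real.sin_int_mul_pi]
          ring
        have hx₀gt : -(Real.pi/2) < x₀ := lt_of_le_of_ne hx₀ge (Ne.symm hx₀ne)
        have htan : Real.tan x₀ = s' := by
          have hper : Real.tan x₀ = Real.tan (α - θ i) := by
            rw [hx₀]
            exact Real.tan_periodic.sub_int_mul_eq m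
          rw [hper, Real.tan_eq_sin_div_cos, hsin1, hcos1,
            mul_div_mul_left _ _ (ne_of_gt hca)]
        refine ⟨m, ?_⟩
        have harc : Real.arctan s' = x₀ := by
          rw [← htan, Real.arctan_tan hx₀gt hx₀lt]
        show x₀ ∈ A
        rw [← harc]
        exact ⟨s', hmem, rfl⟩
      obtain ⟨m, hm⟩ := rigidity A hAne hAbdd hAicc (θ i) hcase H
      have hθi : θ i = -(m * Real.pi) := by linarith
      rw [hθi, Real.sin_neg, Real.sin_int_mul_pi, neg_zero]
    · intro i
      by_contra hsn
      set v₀ := -Real.cos (θ i) / Real.sin (θ i) with hv₀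
      have hβeq : sSup A = Real.pi/2 := le_antisymm hβle (by linarith)
      have hγeq : sInf A = -(Real.pi/2) := le_antisymm (by linarith) hγge
      have h2 : Real.arctan v₀ < sSup A := by
        rw [hβeq]
        exact Real.arctan_lt_pi_div_two v₀
      obtain ⟨a₂, ha₂, hgt⟩ := exists_lt_of_lt_csSup hAne h2
      obtain ⟨s₂, hs₂, rfl⟩ := ha₂
      have hv₂ : v₀ < s₂ := by
        by_contra hle
        push_neg at hle
        rcases eq_or_lt_of_le hle with rfl | hlt'
        · exact lt_irrefl _ hgt
        · exact absurd (Real.arctan_strictMono hlt') (by linarith)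
      have h3 : sInf A < Real.arctan v₀ := by
        rw [hγeq]
        exact Real.neg_pi_div_two_lt_arctan v₀
      obtain ⟨a₁, ha₁, hlt⟩ := exists_lt_of_csInf_lt hAne h3
      obtain ⟨s₁, hs₁, rfl⟩ := ha₁
      have hv₁ : s₁ < v₀ := by
        by_contra hle
        push_neg at hle
        rcases eq_or_lt_of_le hle with rfl | hlt'
        · exact lt_irrefl _ hlt
        · exact absurd (Real.arctan_strictMono hlt') (by linarith)
      have hv₀SS : v₀ ∈ SS := hSSicc s₁ hs₁ s₂ hs₂ ⟨hv₁.le, hv₂.le⟩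
      obtain ⟨hne0, _⟩ := key i v₀ hv₀SS
      apply hne0
      rw [hv₀]
      field_simp
      ring
  -- now every rotation is trivial: the pieces are affine copies
  have hcospm : ∀ i, Real.cos (θ i) = 1 ∨ Real.cos (θ i) = -1 := by
    intro i
    have h := Real.sin_sq_add_cos_sq (θ i)
    rw [hsin i] at h
    have h' : Real.cos (θ i) * Real.cos (θ i) = 1 := by nlinarith
    exact mul_self_eq_one_iff.1 h'
  set ρ : Fin k → ℝ := fun i => r i * Real.cos (θ i) with hρ
  have hρabs : ∀ i, |ρ i| = r i := by
    intro i
    simp only [hρ]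
    rcases hcospm i with h | h <;> rw [h] <;>
      simp [abs_of_pos (hr i).1]
  have hρne : ∀ i, ρ i ≠ 0 := by
    intro i h
    have h2 := hρabs i
    rw [h, abs_zero] at h2
    exact absurd h2.symm (ne_of_gt (hr i).1)
  have hGood : ∀ i, ∀ x ∈ Set.Icc (0:ℝ) 1,
      (ρ i * x + (b i).1 ∈ Set.Icc (0:ℝ) 1) ∧
      f (ρ i * x + (b i).1) = ρ i * f x + (b i).2 := by
    intro i x hx
    obtain ⟨h1, h2⟩ := hpt i x hx
    have e1 : r i * (x * Real.cos (θ i) + f x * Real.sin (θ i)) + (b i).1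
        = ρ i * x + (b i).1 := by
      rw [hsin i]; simp only [hρ]; ring
    have e2 : r i * (-x * Real.sin (θ i) + f x * Real.cos (θ i)) + (b i).2
        = ρ i * f x + (b i).2 := by
      rw [hsin i]; simp only [hρ]; ring
    rw [e1] at h1 h2
    rw [e2] at h2
    exact ⟨h1, h2⟩
  have hSval : ∀ i, ∀ x, S i (x, f x) = (ρ i * x + (b i).1, ρ i * f x + (b i).2) := by
    intro i x
    rw [hSco, hsin i]
    simp only [Prod.mk.injEq, hρ]
    constructor <;> ring
  have hcov1 : ∀ z ∈ Set.Icc (0:ℝ) 1, ∃ i, ∃ x ∈ Set.Icc (0:ℝ) 1,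
      z = ρ i * x + (b i).1 := by
    intro z hz
    have hzG := hGmem z hz
    rw [hcover] at hzG
    obtain ⟨i, hmem⟩ := Set.mem_iUnion.1 hzG
    obtain ⟨p, hpG, hSp⟩ := hmem
    obtain ⟨hp1, hp2⟩ := hGpt p hpG
    rw [hp2, hSval] at hSp
    have := congrArg Prod.fst hSp
    simp only at this
    exact ⟨i, p.1, hp1, this.symm⟩
  -- the maximal contraction ratio
  haveI : Nonempty (Fin k) := ⟨⟨0, hk⟩⟩
  set β₀ := Finset.univ.sup' Finset.univ_nonempty (fun i : Fin k => r i) with hβ₀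
  have hβ₀lt : β₀ < 1 := by
    rw [hβ₀]
    exact (Finset.sup'_lt_iff Finset.univ_nonempty).2 (fun i _ => (hr i).2)
  have hβ₀pos : 0 < β₀ :=
    lt_of_lt_of_le (hr (Classical.arbitrary _)).1 (Finset.le_sup' _ (Finset.mem_univ _))
  have hβ₀le : ∀ i, r i ≤ β₀ := fun i => Finset.le_sup' _ (Finset.mem_univ i)
  -- level-n families of affine copies
  have level : ∀ n : ℕ, ∃ l : List (ℝ × ℝ × ℝ),
      (∀ t ∈ l, t.1 ≠ 0 ∧ |t.1| ≤ β₀^(n+1) ∧ ∀ x ∈ Set.Icc (0:ℝ) 1,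
          (t.1 * x + t.2.1 ∈ Set.Icc (0:ℝ) 1 ∧ f (t.1 * x + t.2.1) = t.1 * f x + t.2.2)) ∧
      (∀ z ∈ Set.Icc (0:ℝ) 1, ∃ t ∈ l, ∃ x ∈ Set.Icc (0:ℝ) 1, z = t.1 * x + t.2.1) := by
    intro n
    induction n with
    | zero =>
      refine ⟨(List.finRange k).map (fun i => (ρ i, (b i).1, (b i).2)), ?_, ?_⟩
      · intro t ht
        obtain ⟨i, _, rfl⟩ := List.mem_map.1 ht
        refine ⟨hρne i, ?_, fun x hx => hGood i x hx⟩
        rw [pow_one, hρabs i]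
        exact hβ₀le i
      · intro z hz
        obtain ⟨i, x, hx, hzx⟩ := hcov1 z hz
        exact ⟨(ρ i, (b i).1, (b i).2),
          List.mem_map_of_mem (List.mem_finRange i), x, hx, hzx⟩
    | succ n ih =>
      obtain ⟨l, hl1, hl2⟩ := ih
      refine ⟨(List.finRange k).flatMap (fun i => l.map
          (fun t => (ρ i * t.1, ρ i * t.2.1 + (b i).1, ρ i * t.2.2 + (b i).2))), ?_, ?_⟩
      · intro t ht
        rw [List.mem_flatMap] at ht
        obtain ⟨i, _, ht⟩ := ht
        rw [List.mem_map] at ht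
        obtain ⟨t', ht', rfl⟩ := ht
        obtain ⟨h0, hble, hfun⟩ := hl1 t' ht'
        refine ⟨mul_ne_zero (hρne i) h0, ?_, ?_⟩
        · calc |ρ i * t'.1| = r i * |t'.1| := by rw [abs_mul, hρabs i]
            _ ≤ β₀ * β₀^(n+1) :=
              mul_le_mul (hβ₀le i) hble (abs_nonneg _) (le_of_lt hβ₀pos)
            _ = β₀^(n+1+1) := by ring
        · intro x hx
          obtain ⟨hm, he⟩ := hfun x hx
          obtain ⟨hm2, he2⟩ := hGood i _ hm
          have e3 : ρ i * t'.1 * x + (ρ i * t'.2.1 + (b i).1)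
              = ρ i * (t'.1 * x + t'.2.1) + (b i).1 := by ring
          constructor
          · simp only
            rw [e3]
            exact hm2
          · simp only
            rw [e3, he2, he]
            ring
      · intro z hz
        obtain ⟨i, x, hx, hzeq⟩ := hcov1 z hz
        obtain ⟨t', ht', y', hy', hxeq⟩ := hl2 x hx
        refine ⟨(ρ i * t'.1, ρ i * t'.2.1 + (b i).1, ρ i * t'.2.2 + (b i).2), ?_, y', hy', ?_⟩
        · rw [List.mem_flatMap]
          exact ⟨i, List.mem_finRange i, List.mem_map_of_mem ht'⟩
        · simp only
          rw [hzeq, hxeq]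
          ring
  -- main Lipschitz estimate
  have main : ∀ u ∈ Set.Icc (0:ℝ) 1, ∀ v ∈ Set.Icc (0:ℝ) 1, u ≤ v →
      |f u - f v| ≤ 3 * ω * (v - u) := by
    intro u hu v hv huv
    have hbound : ∀ n : ℕ, |f u - f v| ≤ ω * (3 * (v - u) + 2 * β₀^(n+1)) := by
      intro n
      obtain ⟨l, hl1, hl2⟩ := level n
      apply chain_bound f ω (β₀^(n+1)) u v hωnn (by positivity) huv
        (l.map (fun t => (min t.2.1 (t.1 + t.2.1), max t.2.1 (t.1 + t.2.1))))
      · -- cover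
        intro z hz1 hz2
        have hzI : z ∈ Set.Icc (0:ℝ) 1 := ⟨le_trans hu.1 hz1, le_trans hz2 hv.2⟩
        obtain ⟨t, ht, xx, hxx, hzeq⟩ := hl2 z hzI
        refine ⟨(min t.2.1 (t.1 + t.2.1), max t.2.1 (t.1 + t.2.1)),
          List.mem_map_of_mem ht, ?_, ?_⟩
        · rcases le_or_gt 0 t.1 with hpos | hneg
          · have hle : t.2.1 ≤ z := by
              rw [hzeq]
              nlinarith [hxx.1, hxx.2]
            exact le_trans (min_le_left _ _) hle
          · have hle : t.1 + t.2.1 ≤ z := by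
              rw [hzeq]
              nlinarith [hxx.1, hxx.2]
            exact le_trans (min_le_right _ _) hle
        · rcases le_or_gt 0 t.1 with hpos | hneg
          · have hle : z ≤ t.1 + t.2.1 := by
              rw [hzeq]
              nlinarith [hxx.1, hxx.2]
            exact le_trans hle (le_max_right _ _)
          · have hle : z ≤ t.2.1 := by
              rw [hzeq]
              nlinarith [hxx.1, hxx.2]
            exact le_trans hle (le_max_left _ _)
      · -- oscillation
        intro pin hpin uu vv h1 h2 h3 h4
        obtain ⟨t, ht, heq⟩ := List.mem_map.1 hpin
        obtain ⟨h0, hble, hfun⟩ := hl1 t ht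
        rw [← heq] at h1 h2 h3 h4 ⊢
        simp only at h1 h2 h3 h4 ⊢
        -- the interval is exactly the image of [0,1] under x ↦ t.1 x + t.2.1
        have hxuI : (uu - t.2.1)/t.1 ∈ Set.Icc (0:ℝ) 1 := by
          rcases lt_or_gt_of_ne h0 with hneg | hpos
          · have hmin : min t.2.1 (t.1 + t.2.1) = t.1 + t.2.1 := min_eq_right (by linarith)
            have hmax : max t.2.1 (t.1 + t.2.1) = t.2.1 := max_eq_left (by linarith)
            rw [hmin] at h1
            rw [hmax] at h2
            constructor
            · rw [le_div_iff_of_neg hneg]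
              linarith
            · rw [div_le_iff_of_neg hneg]
              linarith
          · have hmin : min t.2.1 (t.1 + t.2.1) = t.2.1 := min_eq_left (by linarith)
            have hmax : max t.2.1 (t.1 + t.2.1) = t.1 + t.2.1 := max_eq_right (by linarith)
            rw [hmin] at h1
            rw [hmax] at h2
            constructor
            · exact div_nonneg (by linarith) hpos.le
            · rw [div_le_one hpos]
              linarith
        have hxvI : (vv - t.2.1)/t.1 ∈ Set.Icc (0:ℝ) 1 := by
          rcases lt_or_gt_of_ne h0 with hneg | hpos
          · have hmin : min t.2.1 (t.1 + t.2.1) = t.1 + t.2.1 := min_eq_right (by linarith)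
            have hmax : max t.2.1 (t.1 + t.2.1) = t.2.1 := max_eq_left (by linarith)
            rw [hmin] at h3
            rw [hmax] at h4
            constructor
            · rw [le_div_iff_of_neg hneg]
              linarith
            · rw [div_le_iff_of_neg hneg]
              linarith
          · have hmin : min t.2.1 (t.1 + t.2.1) = t.2.1 := min_eq_left (by linarith)
            have hmax : max t.2.1 (t.1 + t.2.1) = t.1 + t.2.1 := max_eq_right (by linarith)
            rw [hmin] at h3
            rw [hmax] at h4
            constructor
            · exact div_nonneg (by linarith) hpos.le
            · rw [div_le_one hpos]
              linarith
        have hueq : uu = t.1 * ((uu - t.2.1)/t.1) + t.2.1 := by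
          field_simp
          ring
        have hveq : vv = t.1 * ((vv - t.2.1)/t.1) + t.2.1 := by
          field_simp
          ring
        have hfu : f uu = t.1 * f ((uu - t.2.1)/t.1) + t.2.2 := by
          nth_rewrite 1 [hueq]
          exact (hfun _ hxuI).2
        have hfv : f vv = t.1 * f ((vv - t.2.1)/t.1) + t.2.2 := by
          nth_rewrite 1 [hveq]
          exact (hfun _ hxvI).2
        have hdiff : |f uu - f vv| = |t.1| * |f ((uu - t.2.1)/t.1) - f ((vv - t.2.1)/t.1)| := by
          rw [hfu, hfv, ← abs_mul]
          congr 1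
          ring
        have hmm : max t.2.1 (t.1 + t.2.1) - min t.2.1 (t.1 + t.2.1) = |t.1| := by
          rcases le_or_gt 0 t.1 with hpos | hneg
          · rw [min_eq_left (by linarith), max_eq_right (by linarith), abs_of_nonneg hpos]
            ring
          · rw [min_eq_right (by linarith), max_eq_left (by linarith), abs_of_neg hneg]
            ring
        rw [hdiff, hmm, mul_comm]
        exact mul_le_mul_of_nonneg_right (hωb _ hxuI _ hxvI) (abs_nonneg _)
      · -- lengths
        intro pin hpin
        obtain ⟨t, ht, heq⟩ := List.mem_map.1 hpin
        obtain ⟨h0, hble, hfun⟩ := hl1 t ht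
        rw [← heq]
        simp only
        have hmm : max t.2.1 (t.1 + t.2.1) - min t.2.1 (t.1 + t.2.1) = |t.1| := by
          rcases le_or_gt 0 t.1 with hpos | hneg
          · rw [min_eq_left (by linarith), max_eq_right (by linarith), abs_of_nonneg hpos]
            ring
          · rw [min_eq_right (by linarith), max_eq_left (by linarith), abs_of_neg hneg]
            ring
        rw [hmm]
        exact hble
    have htends : Filter.Tendsto (fun n : ℕ => ω * (3 * (v - u) + 2 * β₀^(n+1)))
        Filter.atTop (nhds (ω * (3 * (v - u) + 2 * 0))) := by
      apply Filter.Tendsto.const_mul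
      apply Filter.Tendsto.const_add
      apply Filter.Tendsto.const_mul
      have hpow := tendsto_pow_atTop_nhds_zero_of_lt_one (le_of_lt hβ₀pos) hβ₀lt
      exact hpow.comp (Filter.tendsto_add_atTop_nat 1)
    have hle := ge_of_tendsto htends (Filter.Eventually.of_forall hbound)
    calc |f u - f v| ≤ ω * (3 * (v - u) + 2 * 0) := hle
      _ = 3 * ω * (v - u) := by ring
  intro x hx y hy
  rcases le_total x y with h | h
  · have hm := main x hx y hy h
    have habs : |x - y| = y - x := by
      rw [abs_sub_comm]
      exact abs_of_nonneg (by linarith)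
    rw [habs]
    have : 0 ≤ ω * (y - x) := mul_nonneg hωnn (by linarith)
    nlinarith
  · have hm := main y hy x hx h
    have habs : |x - y| = x - y := abs_of_nonneg (by linarith)
    rw [abs_sub_comm (f x) (f y), habs]
    have : 0 ≤ ω * (x - y) := mul_nonneg hωnn (by linarith)
    nlinarith
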